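/- arXiv:0810.4733 — 6 statements merged into one kernel-verified Lean document; each statement's English description precedes it below -/
import Mathlib

section
/- Suppose U ∈ A is invertible and D(U) = φ₂(U). If α ∈ A is such that 1 + α is invertible and D(α) = φ₁(α + 1) · φ₂(α), then there exists n ∈ ker D such that 1 − Un is invertible and α = Un(1 − Un)⁻¹. (Indeed n = U⁻¹ − U⁻¹(α+1)⁻¹ works, since then α = (1 − Un)⁻¹ − 1 = Un(1 − Un)⁻¹.) -/
/-- Suppose `U ∈ A` is invertible and `D U = φ₂ U`.  If `α ∈ A` is such that `1 + α` is
invertible and `D α = φ₁ (α + 1) * φ₂ α`, then there exists `n ∈ ker D` such that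
`1 - U*n` is invertible and `α = U*n*(1 - U*n)⁻¹`. -/
theorem stmt3 (A B : Type*) [Ring A] [Algebra ℂ A] [Ring B] [Algebra ℂ B]
    (φ₁ φ₂ : A →ₐ[ℂ] B) (D : A →ₗ[ℂ] B)
    (hD : ∀ x y : A, D (x * y) = φ₁ x * D y + D x * φ₂ y)
    (U Ui : A) (hU1 : U * Ui = 1) (hU2 : Ui * U = 1) (hDU : D U = φ₂ U)
    (α w : A) (h1 : (1 + α) * w = 1) (h2 : w * (1 + α) = 1)
    (hα : D α = φ₁ (α + 1) * φ₂ α) :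
    ∃ n v : A, D n = 0 ∧ (1 - U * n) * v = 1 ∧ v * (1 - U * n) = 1 ∧ α = U * n * v := by
  have hD1 : D 1 = 0 := by
    have h := hD 1 1
    simp only [mul_one, map_one, one_mul] at h
    have h' : D 1 + D 1 - D 1 = D 1 - D 1 := by rw [← h]
    simpa using h'
  -- D Ui = - φ₁ Ui
  have hDUi : D Ui = - φ₁ Ui := by
    have h := hD U Ui
    rw [hU1, hD1, hDU, ← map_mul, hU1, map_one] at h
    -- h : 0 = φ₁ U * D Ui + 1
    have h' : φ₁ Ui * (φ₁ U * D Ui + 1) = 0 := by rw [← h, mul_zero]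
    rw [mul_add, ← mul_assoc, ← map_mul, hU2, map_one, one_mul, mul_one] at h'
    -- h' : D Ui + φ₁ Ui = 0
    exact eq_neg_of_add_eq_zero_left h'
  -- D w = - φ₂ (α * w)
  have hDw : D w = - φ₂ (α * w) := by
    have h := hD w (1 + α)
    rw [h2, hD1, map_add, hD1, zero_add, hα] at h
    -- h : 0 = φ₁ w * (φ₁ (α+1) * φ₂ α) + D w * φ₂ (1+α)
    have h' : (φ₁ w * (φ₁ (α + 1) * φ₂ α) + D w * φ₂ (1 + α)) * φ₂ w = 0 := by
      rw [← h, zero_mul]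
    have hw1 : w * (α + 1) = 1 := by rw [add_comm]; exact h2
    rw [add_mul, mul_assoc, mul_assoc, ← map_mul, ← mul_assoc, ← map_mul, hw1, map_one,
      one_mul] at h'
    rw [mul_assoc (D w), ← map_mul, h1, map_one, mul_one] at h'
    -- h' : φ₂ (α * w) + D w = 0
    exact eq_neg_of_add_eq_zero_right h'
  have hUiw : D (Ui * w) = - φ₁ Ui := by
    rw [hD, hDw, hDUi]
    have hsum : α * w + w = 1 := by rw [← h1]; noncomm_ring
    have : φ₁ Ui * -φ₂ (α * w) + -φ₁ Ui * φ₂ w = -(φ₁ Ui * (φ₂ (α * w) + φ₂ w)) := by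
      noncomm_ring
    rw [this, ← map_add, hsum, map_one, mul_one]
  have hUn : U * (Ui - Ui * w) = 1 - w := by
    rw [mul_sub, ← mul_assoc, hU1, one_mul]
  have hsub : 1 - U * (Ui - Ui * w) = w := by rw [hUn, sub_sub_cancel]
  refine ⟨Ui - Ui * w, 1 + α, ?_, ?_, ?_, ?_⟩
  · rw [map_sub, hUiw, hDUi, sub_self]
  · rw [hsub]; exact h2
  · rw [hsub]; exact h1
  · rw [hUn, sub_mul, one_mul, h2]; noncomm_ring
end

section
/- Suppose U ∈ A is invertible and D(U) = φ₂(U). If n ∈ ker D is such that 1 − Un is invertible, then D(Un(1−Un)⁻¹) = φ₁(Un(1−Un)⁻¹ + 1) · φ₂(Un(1−Un)⁻¹). -/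
/-- Suppose `U ∈ A` is invertible and `D U = φ₂ U`.  If `n ∈ ker D` is such that `1 - U*n`
is invertible (with two-sided inverse `v`), then
`D (U*n*(1-U*n)⁻¹) = φ₁ (U*n*(1-U*n)⁻¹ + 1) * φ₂ (U*n*(1-U*n)⁻¹)`. -/
theorem stmt4 (A B : Type*) [Ring A] [Algebra ℂ A] [Ring B] [Algebra ℂ B]
    (φ₁ φ₂ : A →ₐ[ℂ] B) (D : A →ₗ[ℂ] B)
    (hD : ∀ x y : A, D (x * y) = φ₁ x * D y + D x * φ₂ y)
    (U Ui : A) (hU1 : U * Ui = 1) (hU2 : Ui * U = 1) (hDU : D U = φ₂ U)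
    (n v : A) (hn : D n = 0) (h1 : (1 - U * n) * v = 1) (h2 : v * (1 - U * n) = 1) :
    D (U * n * v) = φ₁ (U * n * v + 1) * φ₂ (U * n * v) := by
  have hD1 : D 1 = 0 := by
    have := hD 1 1
    simp only [mul_one, one_mul, map_one] at this
    exact right_eq_add.mp this
  have hDw : D (U * n) = φ₂ (U * n) := by
    rw [hD, hn, hDU, map_mul, mul_zero, zero_add]
  have hφ2 : φ₁ v * φ₁ (1 - U * n) = 1 := by rw [← map_mul, h2, map_one]
  have hkey : φ₁ (1 - U * n) * D v = φ₂ (U * n) * φ₂ v := by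
    have := hD (1 - U * n) v
    rw [h1, hD1] at this
    have hDsub : D (1 - U * n) = - φ₂ (U * n) := by
      rw [map_sub, hD1, hDw, zero_sub]
    rw [hDsub, neg_mul, ← sub_eq_add_neg] at this
    exact sub_eq_zero.mp this.symm
  have hDv : D v = φ₁ v * (φ₂ (U * n) * φ₂ v) := by
    calc D v = (φ₁ v * φ₁ (1 - U * n)) * D v := by rw [hφ2, one_mul]
    _ = φ₁ v * (φ₁ (1 - U * n) * D v) := by rw [mul_assoc]
    _ = φ₁ v * (φ₂ (U * n) * φ₂ v) := by rw [hkey]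
  rw [hD (U * n) v, hDv, hDw]
  simp only [map_add, map_mul, map_one]
  noncomm_ring
end

section
/- For every p ≥ 0 and all f, g ∈ A, the iterated comultiplication satisfies the generalized Leibniz rule Δ⁽ᵖ⁾(fg) = Σ_{k=0}^{p} (Δ⁽ᵏ⁾(f) ⊗ 1^{⊗(p−k)}) · (1^{⊗k} ⊗ Δ⁽ᵖ⁻ᵏ⁾(g)), an identity in the (p+1)-fold tensor power A^{⊗(p+1)} (under the standard identifications of iterated tensor products of algebras). -/
open scoped TensorProduct
set_option maxHeartbeats 1000000
set_option synthInstance.maxHeartbeats 200000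

universe u

/-- A bundled unital associative algebra over `ℂ`. -/
structure BAlg : Type (u + 1) where
  carrier : Type u
  [ringInst : Ring carrier]
  [algInst : Algebra ℂ carrier]

attribute [instance] BAlg.ringInst BAlg.algInst

instance : CoeSort BAlg.{u} (Type u) := ⟨BAlg.carrier⟩

/-- The tower of tensor powers `TP A p = A^{⊗(p+1)}`, built by right-nested binary tensor
products: `TP A 0 = A` and `TP A (p+1) = A ⊗ TP A p`, each with its canonical algebra
structure. -/
noncomputable def TP (A : Type u) [Ring A] [Algebra ℂ A] : ℕ → BAlg.{u}
  | 0 => BAlg.mk A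
  | (p + 1) => BAlg.mk (A ⊗[ℂ] (TP A p : Type u))

variable {A : Type u} [Ring A] [Algebra ℂ A]

/-- `Δ ⊗ id^{⊗p}` acting on the left-most tensor factor of `A^{⊗(p+1)}` (under the standard
identifications of iterated tensor products). -/
noncomputable def leftD (Δ : A →ₗ[ℂ] A ⊗[ℂ] A) :
    ∀ p : ℕ, (TP A p : Type u) →ₗ[ℂ] (TP A (p + 1) : Type u)
  | 0 => Δ
  | (p + 1) =>
      (TensorProduct.assoc ℂ A A (TP A p : Type u)).toLinearMap.comp
        (TensorProduct.map Δ (LinearMap.id : (TP A p : Type u) →ₗ[ℂ] (TP A p : Type u)))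

/-- The iterated comultiplication `Δ⁽ᵖ⁾ : A → A^{⊗(p+1)}`, defined by `Δ⁽⁰⁾ = id` and
`Δ⁽ᵖ⁺¹⁾ = (Δ ⊗ id^{⊗p}) ∘ Δ⁽ᵖ⁾`. -/
noncomputable def iterD (Δ : A →ₗ[ℂ] A ⊗[ℂ] A) : ∀ p : ℕ, A →ₗ[ℂ] (TP A p : Type u)
  | 0 => LinearMap.id
  | (p + 1) => (leftD Δ p).comp (iterD Δ p)

/-- Appending a tensor factor `1` on the right: `A^{⊗(p+1)} → A^{⊗(p+2)}`,
`x ↦ x ⊗ 1`. -/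
noncomputable def appRight : ∀ p : ℕ, (TP A p : Type u) →ₐ[ℂ] (TP A (p + 1) : Type u)
  | 0 => (Algebra.TensorProduct.includeLeft : A →ₐ[ℂ] A ⊗[ℂ] A)
  | (p + 1) => Algebra.TensorProduct.map (AlgHom.id ℂ A) (appRight p)

/-- `x ↦ x ⊗ 1^{⊗ j} : A^{⊗(k+1)} → A^{⊗(k+j+1)}`. -/
noncomputable def padRight (k : ℕ) : ∀ j : ℕ, (TP A k : Type u) →ₐ[ℂ] (TP A (k + j) : Type u)
  | 0 => AlgHom.id ℂ _
  | (j + 1) => (appRight (k + j)).comp (padRight k j)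

/-- `y ↦ 1^{⊗ k} ⊗ y : A^{⊗(j+1)} → A^{⊗(j+k+1)}`. -/
noncomputable def padLeft (j : ℕ) : ∀ k : ℕ, (TP A j : Type u) →ₐ[ℂ] (TP A (j + k) : Type u)
  | 0 => AlgHom.id ℂ _
  | (k + 1) => (Algebra.TensorProduct.includeRight).comp (padLeft j k)

attribute [reducible] TP

noncomputable def castK : {m n : ℕ} → m = n → ((TP A m : Type u) ≃ₐ[ℂ] (TP A n : Type u))
  | _, _, rfl => AlgEquiv.refl

@[simp] theorem castK_rfl {n : ℕ} (h : n = n) (x : (TP A n : Type u)) : castK h x = x := rfl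

theorem castK_castK {a b c : ℕ} (h1 : a = b) (h2 : b = c) (x : (TP A a : Type u)) :
    castK h2 (castK h1 x) = castK (h1.trans h2) x := by subst h1; subst h2; rfl

theorem castK_tmul {m n : ℕ} (h : m = n) (a : A) (x : (TP A m : Type u)) :
    (a ⊗ₜ[ℂ] (castK h x) : (TP A (n+1) : Type u)) = castK (congrArg Nat.succ h) (a ⊗ₜ[ℂ] x : (TP A (m+1) : Type u)) := by
  subst h; rfl

theorem cast_eq_castK {m n : ℕ} (h : m = n) (x : (TP A m : Type u)) :
    cast (congrArg (fun n => (TP A n : Type u)) h) x = castK h x := by subst h; rfl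

theorem leftD_castK (Δ : A →ₗ[ℂ] A ⊗[ℂ] A) {m n : ℕ} (h : m = n) (x : (TP A m : Type u)) :
    leftD Δ n (castK h x) = castK (congrArg Nat.succ h) (leftD Δ m x) := by subst h; rfl

theorem appRight_castK {m n : ℕ} (h : m = n) (x : (TP A m : Type u)) :
    appRight n (castK h x) = castK (congrArg Nat.succ h) (appRight m x) := by subst h; rfl

theorem TP_mul (p : ℕ) (a b : A) (x y : (TP A p : Type u)) :
    ((a ⊗ₜ[ℂ] x) * (b ⊗ₜ[ℂ] y) : (TP A (p+1) : Type u)) = (a*b) ⊗ₜ[ℂ] (x*y) :=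
  Algebra.TensorProduct.tmul_mul_tmul a b x y

theorem leftD_tmul (Δ : A →ₗ[ℂ] A ⊗[ℂ] A) (p : ℕ) (a : A) (x : (TP A p : Type u)) :
    leftD Δ (p+1) (a ⊗ₜ[ℂ] x) = (TensorProduct.assoc ℂ A A (TP A p : Type u)) ((Δ a) ⊗ₜ[ℂ] x) :=
  rfl

/-- leftmost inclusion `a ↦ a ⊗ 1^{⊗ j}`. -/
noncomputable def iota : ∀ j : ℕ, A →ₐ[ℂ] (TP A j : Type u)
  | 0 => AlgHom.id ℂ A
  | (_ + 1) => Algebra.TensorProduct.includeLeft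

theorem iota_succ (j : ℕ) (a : A) :
    iota (j+1) a = (a ⊗ₜ[ℂ] (1 : (TP A j : Type u)) : (TP A (j+1) : Type u)) := rfl

theorem appRight_iota (j : ℕ) (a : A) : appRight j (iota j a) = iota (j+1) a := by
  cases j with
  | zero => rfl
  | succ m =>
      show (Algebra.TensorProduct.map (AlgHom.id ℂ A) (appRight m))
          (a ⊗ₜ[ℂ] (1 : (TP A m : Type u))) = _
      rw [Algebra.TensorProduct.map_tmul, map_one, iota_succ]
      rfl

theorem padRight_zero_left (j : ℕ) (a : A) :
    padRight 0 j a = castK (Nat.zero_add j).symm (iota j a) := by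
  induction j with
  | zero => rfl
  | succ m ih =>
      show appRight (0 + m) (padRight 0 m a) = _
      rw [ih, appRight_castK, appRight_iota]

/-- `b ⊗ c ↦ b ⊗ c ⊗ 1^{⊗j}`. -/
noncomputable def W (j : ℕ) : (TP A 1 : Type u) →ₐ[ℂ] (TP A (j+1) : Type u) :=
  Algebra.TensorProduct.map (AlgHom.id ℂ A) (iota j)

theorem W_zero (x : (TP A 1 : Type u)) : W (A := A) 0 x = x := by
  show (Algebra.TensorProduct.map (AlgHom.id ℂ A) (AlgHom.id ℂ A)) x = x
  rw [Algebra.TensorProduct.map_id]; rfl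

theorem padRight_one_left (j : ℕ) (x : (TP A 1 : Type u)) :
    padRight 1 j x = castK (Nat.add_comm j 1) (W (A := A) j x) := by
  induction j with
  | zero => rw [W_zero]; rfl
  | succ m ih =>
      show appRight (1 + m) (padRight 1 m x) = _
      rw [ih, appRight_castK]
      have : appRight (m+1) (W (A := A) m x) = W (A := A) (m+1) x := by
        show (Algebra.TensorProduct.map (AlgHom.id ℂ A) (appRight m))
            ((Algebra.TensorProduct.map (AlgHom.id ℂ A) (iota m)) x) = _
        rw [← AlgHom.comp_apply,
          ← Algebra.TensorProduct.map_id_comp (S := ℂ) (A := A) (appRight m) (iota m)]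
        have h2 : ((appRight m).comp (iota m) : A →ₐ[ℂ] (TP A (m+1) : Type u)) = iota (m+1) :=
          AlgHom.ext fun a => appRight_iota m a
        rw [h2]
        rfl
      rw [this]

theorem appRight_leftD (Δ : A →ₗ[ℂ] A ⊗[ℂ] A) :
    ∀ (n : ℕ) (y : (TP A n : Type u)),
      appRight (n+1) (leftD Δ n y) = leftD Δ (n+1) (appRight n y) := by
  intro n
  cases n with
  | zero =>
      intro y
      show appRight 1 (Δ y) = leftD Δ 1 (y ⊗ₜ[ℂ] (1 : A))
      rw [leftD_tmul Δ 0]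
      generalize Δ y = t
      induction t using TensorProduct.induction_on with
      | zero => simp
      | tmul b c =>
          show (Algebra.TensorProduct.map (AlgHom.id ℂ A)
              (Algebra.TensorProduct.includeLeft : (TP A 0 : Type u) →ₐ[ℂ] (TP A 1 : Type u)))
              (b ⊗ₜ[ℂ] c) = _
          rw [Algebra.TensorProduct.map_tmul, TensorProduct.assoc_tmul]
          rfl
      | add s t hs ht => simp only [map_add, TensorProduct.add_tmul, hs, ht]
  | succ m =>
      intro y
      refine TensorProduct.induction_on y ?_ ?_ ?_
      · simp
      · intro a w
        show appRight (m+2) (leftD Δ (m+1) (a ⊗ₜ[ℂ] w))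
          = leftD Δ (m+2) ((a ⊗ₜ[ℂ] appRight m w : (TP A (m+2) : Type u)))
        rw [leftD_tmul Δ m, leftD_tmul Δ (m+1)]
        generalize Δ a = t
        induction t using TensorProduct.induction_on with
        | zero => simp
        | tmul b c =>
            rw [TensorProduct.assoc_tmul, TensorProduct.assoc_tmul]
            show (Algebra.TensorProduct.map (AlgHom.id ℂ A) (appRight (m+1)))
                (b ⊗ₜ[ℂ] (c ⊗ₜ[ℂ] w)) = _
            rw [Algebra.TensorProduct.map_tmul]
            show _ = b ⊗ₜ[ℂ] ((Algebra.TensorProduct.map (AlgHom.id ℂ A) (appRight m)) (c ⊗ₜ[ℂ] w))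
            rw [Algebra.TensorProduct.map_tmul]
            rfl
        | add s t hs ht =>
            simp only [map_add, TensorProduct.add_tmul, hs, ht]
      · intro s t hs ht
        simp only [map_add, hs, ht]

theorem padRight_leftD (Δ : A →ₗ[ℂ] A ⊗[ℂ] A) (m : ℕ) :
    ∀ (j : ℕ) (z : (TP A m : Type u)),
      padRight (m+1) j (leftD Δ m z)
        = castK (Nat.succ_add m j).symm (leftD Δ (m+j) (padRight m j z)) := by
  intro j
  induction j with
  | zero => intro z; rfl
  | succ n ih =>
      intro z
      show appRight ((m+1) + n) (padRight (m+1) n (leftD Δ m z)) = _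
      rw [ih, appRight_castK, appRight_leftD]
      rfl

noncomputable def oneT (p : ℕ) (w : (TP A p : Type u)) : (TP A (p+1) : Type u) :=
  (1:A) ⊗ₜ[ℂ] w

theorem leftD_mul_oneTmul (Δ : A →ₗ[ℂ] A ⊗[ℂ] A) (p : ℕ)
    (z : (TP A (p+1) : Type u)) (w : (TP A p : Type u)) :
    leftD Δ (p+1) (z * oneT p w)
      = leftD Δ (p+1) z * oneT (p+1) (oneT p w) := by
  refine TensorProduct.induction_on z ?_ ?_ ?_
  · rw [zero_mul, map_zero, zero_mul]
  · intro a y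
    simp only [oneT]
    rw [TP_mul, leftD_tmul, leftD_tmul, mul_one]
    generalize Δ a = t
    refine TensorProduct.induction_on t ?_ ?_ ?_
    · simp only [TensorProduct.zero_tmul, map_zero, zero_mul]
    · intro b c
      rw [TensorProduct.assoc_tmul, TensorProduct.assoc_tmul]
      have h1 : ((c ⊗ₜ[ℂ] y) * ((1:A) ⊗ₜ[ℂ] w) : A ⊗[ℂ] (TP A p : Type u)) = c ⊗ₜ[ℂ] (y*w) := by
        rw [Algebra.TensorProduct.tmul_mul_tmul, mul_one]
      have h2 : ((b ⊗ₜ[ℂ] (c ⊗ₜ[ℂ] y)) * ((1:A) ⊗ₜ[ℂ] ((1:A) ⊗ₜ[ℂ] w))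
            : A ⊗[ℂ] (A ⊗[ℂ] (TP A p : Type u)))
          = (b*(1:A)) ⊗ₜ[ℂ] ((c ⊗ₜ[ℂ] y) * ((1:A) ⊗ₜ[ℂ] w)) :=
        Algebra.TensorProduct.tmul_mul_tmul b 1 (c ⊗ₜ[ℂ] y) ((1:A) ⊗ₜ[ℂ] w)
      exact (h2.trans (by rw [h1, mul_one])).symm
    · intro s t hs ht
      simp only [TensorProduct.add_tmul, map_add, add_mul, hs, ht]
  · intro s t hs ht
    simp only [add_mul, map_add, hs, ht]

noncomputable def tT (p : ℕ) (a : A) (w : (TP A p : Type u)) : (TP A (p+1) : Type u) :=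
  a ⊗ₜ[ℂ] w

theorem leftD_iota_mul (Δ : A →ₗ[ℂ] A ⊗[ℂ] A)
    (hΔ : ∀ a b : A, Δ (a * b) = (a ⊗ₜ[ℂ] (1 : A)) * Δ b + Δ a * ((1 : A) ⊗ₜ[ℂ] b)) :
    ∀ (j : ℕ) (a : A) (v : (TP A j : Type u)),
      leftD Δ j (iota j a * v) = iota (j+1) a * leftD Δ j v + W (A := A) j (Δ a) * oneT j v := by
  intro j
  induction j with
  | zero =>
      intro a v
      rw [W_zero]
      exact hΔ a v
  | succ m ih =>
      intro a v
      refine TensorProduct.induction_on v ?_ ?_ ?_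
      · simp only [mul_zero, map_zero, oneT, TensorProduct.tmul_zero, add_zero]
      · intro b w
        have hprod : iota (m+1) a * tT m b w = tT m (a*b) w := by
          rw [iota_succ]
          simp only [tT]
          exact (Algebra.TensorProduct.tmul_mul_tmul a b (1 : (TP A m : Type u)) w).trans
            (by rw [one_mul])
        simp only [tT] at hprod
        rw [hprod, leftD_tmul, hΔ, TensorProduct.add_tmul, map_add]
        congr 1
        · -- (a ⊗ 1)Δb part
          rw [leftD_tmul]
          generalize Δ b = t
          refine TensorProduct.induction_on t ?_ ?_ ?_
          · simp only [TensorProduct.zero_tmul, map_zero, zero_mul, mul_zero]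
          · intro c d
            rw [TensorProduct.assoc_tmul]
            have h1 : ((a ⊗ₜ[ℂ] (1:A)) * (c ⊗ₜ[ℂ] d) : A ⊗[ℂ] A) = (a*c) ⊗ₜ[ℂ] ((1:A)*d) :=
              Algebra.TensorProduct.tmul_mul_tmul a c 1 d
            rw [h1, one_mul, TensorProduct.assoc_tmul, iota_succ]
            have h2 : tT (m+1) a 1 * tT (m+1) c (tT m d w)
                = tT (m+1) (a*c) ((1 : (TP A (m+1) : Type u)) * tT m d w) :=
              Algebra.TensorProduct.tmul_mul_tmul a c 1 (tT m d w)
            simp only [tT] at h2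
            rw [h2, one_mul]
          · intro s t hs ht
            simp only [TensorProduct.add_tmul, map_add, mul_add, add_mul, hs, ht]
        · -- Δa (1 ⊗ b) part
          generalize Δ a = s
          refine TensorProduct.induction_on s ?_ ?_ ?_
          · simp only [TensorProduct.zero_tmul, map_zero, zero_mul, mul_zero]
          · intro e c
            have h1 : ((e ⊗ₜ[ℂ] c) * ((1:A) ⊗ₜ[ℂ] b) : A ⊗[ℂ] A) = (e*(1:A)) ⊗ₜ[ℂ] (c*b) :=
              Algebra.TensorProduct.tmul_mul_tmul e 1 c b
            rw [h1, mul_one, TensorProduct.assoc_tmul]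
            have hW : W (A := A) (m+1) (e ⊗ₜ[ℂ] c) = tT (m+1) e (iota (m+1) c) :=
              Algebra.TensorProduct.map_tmul _ _ e c
            simp only [tT] at hW
            rw [hW]
            simp only [oneT]
            have h2 : tT (m+1) e (iota (m+1) c) * tT (m+1) 1 (tT m b w)
                = tT (m+1) (e*(1:A)) (iota (m+1) c * tT m b w) :=
              Algebra.TensorProduct.tmul_mul_tmul e 1 (iota (m+1) c) (tT m b w)
            have h3 : iota (m+1) c * tT m b w = tT m (c*b) w := by
              rw [iota_succ]
              simp only [tT]
              exact (Algebra.TensorProduct.tmul_mul_tmul c b (1 : (TP A m : Type u)) w).trans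
                (by rw [one_mul])
            simp only [tT] at h2 h3
            rw [h2, mul_one, h3]
          · intro s t hs ht
            simp only [TensorProduct.add_tmul, map_add, add_mul, hs, ht]
      · intro s t hs ht
        simp only [mul_add, map_add, oneT, TensorProduct.tmul_add, hs, ht]
        abel

noncomputable def term (Δ : A →ₗ[ℂ] A ⊗[ℂ] A) (f g : A) (k j : ℕ) : (TP A (k+j) : Type u) :=
  padRight k j (iterD Δ k f) * castK (Nat.add_comm j k) (padLeft j k (iterD Δ j g))

theorem castK_oneT {m n : ℕ} (h : m = n) (y : (TP A m : Type u)) :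
    oneT n (castK h y) = castK (congrArg Nat.succ h) (oneT m y) := by subst h; rfl

theorem castK_oneT' (j k : ℕ) (y : (TP A (j+k) : Type u)) :
    castK (Nat.add_comm j (k+1)) (oneT (j+k) y)
      = castK (Nat.succ_add k j).symm (oneT (k+j) (castK (Nat.add_comm j k) y)) := by
  rw [castK_oneT, castK_castK]

theorem term_succ (Δ : A →ₗ[ℂ] A ⊗[ℂ] A) (f g : A) (k j : ℕ) :
    term Δ f g (k+1) j
      = castK (Nat.succ_add k j).symm
          (leftD Δ (k+j) (padRight k j (iterD Δ k f))
            * oneT (k+j) (castK (Nat.add_comm j k) (padLeft j k (iterD Δ j g)))) := by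
  simp only [term]
  have h1 : iterD Δ (k+1) f = leftD Δ k (iterD Δ k f) := rfl
  have h2 : padLeft j (k+1) (iterD Δ j g) = oneT (j+k) (padLeft j k (iterD Δ j g)) := rfl
  rw [h1, padRight_leftD, h2, castK_oneT', ← map_mul]

theorem term_zero (Δ : A →ₗ[ℂ] A ⊗[ℂ] A) (f g : A) (j : ℕ) :
    term Δ f g 0 j = castK (Nat.zero_add j).symm (iota j f * iterD Δ j g) := by
  simp only [term]
  have hf : iterD Δ 0 f = f := rfl
  have h1 : padLeft j 0 (iterD Δ j g) = iterD Δ j g := rfl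
  have h2 : castK (Nat.add_comm j 0) (iterD Δ j g)
      = castK (Nat.zero_add j).symm (iterD Δ j g) := rfl
  rw [hf, h1, h2, padRight_zero_left, ← map_mul]

theorem term_one (Δ : A →ₗ[ℂ] A ⊗[ℂ] A) (f g : A) (j : ℕ) :
    term Δ f g 1 j = castK (Nat.add_comm j 1) (W (A := A) j (Δ f) * oneT j (iterD Δ j g)) := by
  simp only [term]
  have hf : iterD Δ 1 f = Δ f := rfl
  have h1 : padLeft j 1 (iterD Δ j g) = oneT j (iterD Δ j g) := rfl
  rw [hf, h1, padRight_one_left, ← map_mul]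

theorem leftD_term_succ (Δ : A →ₗ[ℂ] A ⊗[ℂ] A) (f g : A) (k j : ℕ) :
    leftD Δ ((k+1)+j) (term Δ f g (k+1) j)
      = castK (Nat.succ_add (k+1) j) (term Δ f g (k+1+1) j) := by
  rw [term_succ Δ f g k j, leftD_castK, leftD_mul_oneTmul]
  rw [term_succ Δ f g (k+1) j, castK_castK, castK_rfl]
  have hp : iterD Δ (k+1) f = leftD Δ k (iterD Δ k f) := rfl
  have h2 : padLeft j (k+1) (iterD Δ j g) = oneT (j+k) (padLeft j k (iterD Δ j g)) := rfl
  rw [hp, padRight_leftD, leftD_castK, h2, castK_oneT']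
  conv_rhs => rw [castK_oneT, ← map_mul]

theorem leftD_term_zero (Δ : A →ₗ[ℂ] A ⊗[ℂ] A)
    (hΔ : ∀ a b : A, Δ (a * b) = (a ⊗ₜ[ℂ] (1 : A)) * Δ b + Δ a * ((1 : A) ⊗ₜ[ℂ] b))
    (f g : A) (j : ℕ) :
    leftD Δ (0+j) (term Δ f g 0 j)
      = term Δ f g 0 (j+1)
        + castK (show (1+j : ℕ) = 0+(j+1) by omega) (term Δ f g 1 j) := by
  rw [term_zero Δ f g j, leftD_castK, leftD_iota_mul Δ hΔ j f (iterD Δ j g), map_add,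
    term_zero Δ f g (j+1), term_one Δ f g j, castK_castK]
  rfl

theorem castK_term_congr (Δ : A →ₗ[ℂ] A ⊗[ℂ] A) (f g : A) {k j j' n : ℕ}
    (hj : j = j') (h1 : k+j = n) (h2 : k+j' = n) :
    castK h1 (term Δ f g k j) = castK h2 (term Δ f g k j') := by subst hj; rfl

theorem mainL (Δ : A →ₗ[ℂ] A ⊗[ℂ] A)
    (hΔ : ∀ a b : A, Δ (a * b) = (a ⊗ₜ[ℂ] (1 : A)) * Δ b + Δ a * ((1 : A) ⊗ₜ[ℂ] b))
    (f g : A) : ∀ p : ℕ,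
    iterD Δ p (f * g) = ∑ k : Fin (p+1),
      castK (Nat.add_sub_cancel' (Nat.lt_succ_iff.mp k.isLt)) (term Δ f g k.1 (p - k.1)) := by
  intro p
  induction p with
  | zero =>
      rw [Fin.sum_univ_one]
      rfl
  | succ p ih =>
      have h0 : iterD Δ (p+1) (f*g) = leftD Δ p (iterD Δ p (f*g)) := rfl
      rw [h0, ih, map_sum, Fin.sum_univ_succ]
      conv_rhs => rw [Fin.sum_univ_succ, Fin.sum_univ_succ]
      rw [← add_assoc]
      congr 1
      · -- head terms
        simp only [Fin.val_zero, Fin.val_succ]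
        erw [leftD_castK, leftD_term_zero Δ hΔ f g (p - 0), map_add]
        refine congrArg₂ (· + ·) ?_ ?_
        · rfl
        · exact castK_castK (by omega) (by omega) _
      · -- tail terms
        refine Finset.sum_congr rfl ?_
        intro k _
        simp only [Fin.val_succ]
        rw [leftD_castK, leftD_term_succ Δ f g k.1 (p - (k.1+1)), castK_castK]
        exact castK_term_congr Δ f g
          (show p - (k.1+1) = p+1 - (k.1+1+1) by omega) _ _

theorem summand_eq (Δ : A →ₗ[ℂ] A ⊗[ℂ] A) (f g : A) {k j p : ℕ} (h : k + j = p)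
    (h2 : k + (p - k) = p) :
    cast (congrArg (fun n => (TP A n : Type u)) h) (padRight k j (iterD Δ k f)) *
      cast (congrArg (fun n => (TP A n : Type u)) ((Nat.add_comm j k).trans h))
        (padLeft j k (iterD Δ j g))
      = castK h2 (term Δ f g k (p - k)) := by
  subst h
  rw [cast_eq_castK, cast_eq_castK,
    castK_term_congr Δ f g (show k+j-k = j by omega) h2 rfl, castK_rfl, castK_rfl]
  all_goals rfl

theorem stmt5' (Δ : A →ₗ[ℂ] A ⊗[ℂ] A)
    (hΔ : ∀ a b : A, Δ (a * b) = (a ⊗ₜ[ℂ] (1 : A)) * Δ b + Δ a * ((1 : A) ⊗ₜ[ℂ] b))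
    (p : ℕ) (f g : A) :
    iterD Δ p (f * g) =
      ∑ kj ∈ (Finset.HasAntidiagonal.antidiagonal p).attach,
        cast (congrArg (fun n => (TP A n : Type u)) (Finset.HasAntidiagonal.mem_antidiagonal.mp kj.2))
            (padRight kj.1.1 kj.1.2 (iterD Δ kj.1.1 f)) *
          cast (congrArg (fun n => (TP A n : Type u))
              ((Nat.add_comm kj.1.2 kj.1.1).trans (Finset.HasAntidiagonal.mem_antidiagonal.mp kj.2)))
            (padLeft kj.1.2 kj.1.1 (iterD Δ kj.1.2 g)) := by
  refine (mainL Δ hΔ f g p).trans ?_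
  refine (Finset.sum_bij
    (fun kj _ => (⟨kj.1.1, by have := Finset.HasAntidiagonal.mem_antidiagonal.mp kj.2; omega⟩ : Fin (p+1)))
    (fun _ _ => Finset.mem_univ _) ?_ ?_ ?_).symm
  · intro a₁ _ a₂ _ hEq
    have h1 := Finset.HasAntidiagonal.mem_antidiagonal.mp a₁.2
    have h2 := Finset.HasAntidiagonal.mem_antidiagonal.mp a₂.2
    have hv : a₁.1.1 = a₂.1.1 := congrArg Fin.val hEq
    exact Subtype.ext (Prod.ext hv (by omega))
  · intro b _
    exact ⟨⟨(b.1, p - b.1), Finset.HasAntidiagonal.mem_antidiagonal.mpr (by omega)⟩,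
      Finset.mem_attach _ _, by ext; rfl⟩
  · intro kj _
    exact summand_eq Δ f g (Finset.HasAntidiagonal.mem_antidiagonal.mp kj.2) _

/-- Generalized Leibniz rule: for a derivation-comultiplication `Δ` on `A`
(`Δ (a b) = (a ⊗ 1) Δ b + Δ a (1 ⊗ b)`), for every `p ≥ 0` and all `f, g ∈ A`,
`Δ⁽ᵖ⁾(f g) = Σ_{k=0}^{p} (Δ⁽ᵏ⁾ f ⊗ 1^{⊗(p−k)}) · (1^{⊗k} ⊗ Δ⁽ᵖ⁻ᵏ⁾ g)`
in `A^{⊗(p+1)}`. -/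
theorem stmt5 (Δ : A →ₗ[ℂ] A ⊗[ℂ] A)
    (hΔ : ∀ a b : A, Δ (a * b) = (a ⊗ₜ[ℂ] (1 : A)) * Δ b + Δ a * ((1 : A) ⊗ₜ[ℂ] b))
    (p : ℕ) (f g : A) :
    iterD Δ p (f * g) =
      ∑ kj ∈ (Finset.HasAntidiagonal.antidiagonal p).attach,
        cast (congrArg (fun n => (TP A n : Type u)) (Finset.HasAntidiagonal.mem_antidiagonal.mp kj.2))
            (padRight kj.1.1 kj.1.2 (iterD Δ kj.1.1 f)) *
          cast (congrArg (fun n => (TP A n : Type u))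
              ((Nat.add_comm kj.1.2 kj.1.1).trans (Finset.HasAntidiagonal.mem_antidiagonal.mp kj.2)))
            (padLeft kj.1.2 kj.1.1 (iterD Δ kj.1.2 g)) := by
  exact stmt5' Δ hΔ p f g
end

section
/- Let A be a unital C*-algebra, T ∈ A, and ε > 0 such that Im T ≥ ε·1 (i.e. Im T − ε·1 is a positive element). Then T is invertible, ‖T⁻¹‖ ≤ ε⁻¹, and Im(T⁻¹) ≤ −(ε + ε⁻¹‖T‖²)⁻¹ · 1. -/
open scoped NNReal in
open CFC in
private lemma stmt11_aux (A : Type*) [NormedRing A] [StarRing A] [CStarRing A]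
    [NormedAlgebra ℂ A] [CompleteSpace A] [StarModule ℂ A]
    [PartialOrder A] [StarOrderedRing A] [Nontrivial A]
    (T : A) (ε : ℝ) (hε : 0 < ε)
    (h : ((ε : ℂ)) • (1 : A) ≤ (2 * Complex.I)⁻¹ • (T - star T)) :
    IsUnit T ∧ ‖Ring.inverse T‖ ≤ ε⁻¹ ∧
      (2 * Complex.I)⁻¹ • (Ring.inverse T - star (Ring.inverse T)) ≤
        ((-(ε + ε⁻¹ * ‖T‖ ^ 2)⁻¹ : ℝ) : ℂ) • (1 : A) := by
  letI : CStarAlgebra A := { }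
  set b : A := (2 * Complex.I)⁻¹ • (T - star T) with hbdef
  have hb_sa : IsSelfAdjoint b := by
    rw [hbdef, IsSelfAdjoint, star_smul, star_sub, star_star, ← neg_sub T (star T), smul_neg,
      ← neg_smul]
    congr 1
    simp [Complex.ext_iff]
  have hεb : algebraMap ℝ A ε ≤ b := by
    refine le_trans (le_of_eq ?_) h
    rw [Algebra.algebraMap_eq_smul_one, ← Complex.coe_smul]
  have halg_nonneg : ∀ s : ℝ, 0 ≤ s → (0:A) ≤ algebraMap ℝ A s := by
    intro s hs
    have h1 : algebraMap ℝ A s = star (algebraMap ℝ A (Real.sqrt s)) * algebraMap ℝ A (Real.sqrt s) := by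
      rw [IsSelfAdjoint.algebraMap A (IsSelfAdjoint.all _), ← map_mul,
        Real.mul_self_sqrt hs]
    rw [h1]
    exact star_mul_self_nonneg _
  have hε0 : (0:A) ≤ algebraMap ℝ A ε := halg_nonneg ε hε.le
  have hεu : IsUnit (algebraMap ℝ A ε) := (isUnit_iff_ne_zero.mpr hε.ne').map (algebraMap ℝ A)
  have hbu : IsUnit b := CStarAlgebra.isUnit_of_le _ hεb (IsStrictlyPositive.iff_of_unital.mpr ⟨hε0, hεu⟩)
  have hb0 : (0:A) ≤ b := hε0.trans hεb
  -- r = b^{-1/2}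
  have hspec : (0:ℝ≥0) ∉ spectrum ℝ≥0 b := (spectrum.zero_notMem_iff ℝ≥0).mpr hbu
  set r : A := b ^ (-(1 / 2) : ℝ) with hrdef
  have hr0 : (0:A) ≤ r := CFC.rpow_nonneg
  have hr_sa : IsSelfAdjoint r := .of_nonneg hr0
  have hrr : r * r = b ^ (-1 : ℝ) := by
    rw [hrdef, ← CFC.rpow_add hbu]; norm_num
  have hrbr : r * b * r = 1 := CFC.conjugate_rpow_neg_one_half b (IsStrictlyPositive.iff_of_unital.mpr ⟨hb0, hbu⟩)
  obtain ⟨bu, hbu_eq⟩ := hbu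
  have hbrr : b * (r * r) = 1 := by
    rw [hrr, ← hbu_eq, CFC.rpow_neg_one_eq_inv bu (hbu_eq ▸ hb0), Units.mul_inv]
  have hrrb : (r * r) * b = 1 := by
    rw [hrr, ← hbu_eq, CFC.rpow_neg_one_eq_inv bu (hbu_eq ▸ hb0), Units.inv_mul]
  have hrru : r * (b * r) = 1 := by rw [← mul_assoc, hrbr]
  have hrru' : (b * r) * r = 1 := by rw [mul_assoc, hbrr]
  set ru : Aˣ := ⟨r, b * r, hrru, hrru'⟩ with hrudef
  -- D = r T r
  set D : A := r * T * r with hDdef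
  have hTsT : T - star T = (2 * Complex.I) • b := by
    rw [hbdef, smul_inv_smul₀ (by simp [Complex.ext_iff] : (2 * Complex.I) ≠ 0)]
  have hDIm : D - star D = (2 * Complex.I) • (1 : A) := by
    rw [hDdef, star_mul, star_mul, hr_sa.star_eq, ← mul_assoc]
    calc r * T * r - r * star T * r = r * ((T - star T) * r) := by noncomm_ring
    _ = (2 * Complex.I) • (r * (b * r)) := by
        rw [hTsT, smul_mul_assoc, mul_smul_comm]
    _ = (2 * Complex.I) • (1 : A) := by rw [hrru]
  set c : A := D - Complex.I • (1:A) with hcdef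
  have hc_sa : IsSelfAdjoint c := by
    rw [hcdef, IsSelfAdjoint, star_sub, star_smul, star_one]
    have : star D = D - (2 * Complex.I) • (1:A) := by
      rw [← hDIm]; abel
    rw [this]
    simp only [Complex.star_def, Complex.conj_I, neg_smul]
    rw [two_mul, add_smul]
    abel
  have hDc : D = c + Complex.I • (1:A) := by rw [hcdef]; abel
  have hsD : star D = c - Complex.I • (1:A) := by
    nth_rewrite 1 [show D = c + Complex.I • (1:A) from hDc]
    rw [star_add, hc_sa.star_eq, star_smul, star_one, Complex.star_def, Complex.conj_I, neg_smul]
    abel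
  have key : ∀ x : A, (x - Complex.I • 1) * (x + Complex.I • 1) = x * x + 1 := by
    intro x
    have h1 : x * (Complex.I • (1:A)) = Complex.I • x := by rw [mul_smul_comm, mul_one]
    have h2 : (Complex.I • (1:A)) * x = Complex.I • x := by rw [smul_mul_assoc, one_mul]
    have h3 : (Complex.I • (1:A)) * (Complex.I • (1:A)) = -1 := by
      rw [smul_mul_assoc, one_mul, smul_smul, Complex.I_mul_I, neg_smul, one_smul]
    rw [sub_mul, mul_add, mul_add, h1, h2, h3]
    abel
  have key2 : ∀ x : A, (x + Complex.I • 1) * (x - Complex.I • 1) = x * x + 1 := by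
    intro x
    have h1 : x * (Complex.I • (1:A)) = Complex.I • x := by rw [mul_smul_comm, mul_one]
    have h2 : (Complex.I • (1:A)) * x = Complex.I • x := by rw [smul_mul_assoc, one_mul]
    have h3 : (Complex.I • (1:A)) * (Complex.I • (1:A)) = -1 := by
      rw [smul_mul_assoc, one_mul, smul_smul, Complex.I_mul_I, neg_smul, one_smul]
    rw [add_mul, mul_sub, mul_sub, h1, h2, h3]
    abel
  have hDsD : star D * D = c * c + 1 := by rw [hsD, hDc]; exact key c
  have hDDs : D * star D = c * c + 1 := by rw [hsD]; nth_rewrite 1 [hDc]; exact key2 c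
  have hcc0 : (0:A) ≤ c * c := by simpa [hc_sa.star_eq] using star_mul_self_nonneg c
  have hw1 : (1:A) ≤ c * c + 1 := le_add_of_nonneg_left hcc0
  obtain ⟨w, hw_eq⟩ := CStarAlgebra.isUnit_of_le _ hw1 (IsStrictlyPositive.iff_of_unital.mpr ⟨zero_le_one, isUnit_one⟩)
  have hDcomm : Commute D ↑w := by
    rw [hw_eq]
    have h1 : Commute D c := by
      rw [hDc]
      exact ((Commute.refl c).add_left ((Commute.one_left c).smul_left Complex.I))
    exact (h1.mul_right h1).add_right (Commute.one_right D)
  set Du : Aˣ := ⟨D, star D * ↑w⁻¹,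
    by rw [← mul_assoc, hDDs, ← hw_eq, Units.mul_inv],
    by rw [mul_assoc, ← (hDcomm.units_inv_right).eq, ← mul_assoc, hDsD, ← hw_eq, Units.mul_inv]⟩
    with hDudef
  -- T as a unit
  have hD2 : D = ↑ru * T * ↑ru := rfl
  have hTD : T = ↑(ru⁻¹ * Du * ru⁻¹) := by
    rw [Units.val_mul, Units.val_mul]
    show T = ↑ru⁻¹ * D * ↑ru⁻¹
    rw [hD2, mul_assoc (↑ru : A) T ↑ru, Units.inv_mul_cancel_left, Units.mul_inv_cancel_right]
  have hT_unit : IsUnit T := hTD ▸ (ru⁻¹ * Du * ru⁻¹).isUnit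
  have hinv_unit : (ru⁻¹ * Du * ru⁻¹)⁻¹ = ru * Du⁻¹ * ru := by group
  have hV : Ring.inverse T = r * ↑Du⁻¹ * r := by
    rw [hTD, Ring.inverse_unit, hinv_unit, Units.val_mul, Units.val_mul]
  -- norm of Du⁻¹
  have hwinv_nonneg : (0:A) ≤ ↑w⁻¹ :=
    inv_nonneg_of_nonneg w (by rw [hw_eq]; exact zero_le_one.trans hw1)
  have hwinv_sa : IsSelfAdjoint (↑w⁻¹ : A) := .of_nonneg hwinv_nonneg
  have hx : star (↑Du⁻¹ : A) * ↑Du⁻¹ = ↑w⁻¹ := by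
    show star (star D * ↑w⁻¹) * (star D * ↑w⁻¹) = ↑w⁻¹
    rw [star_mul, star_star, hwinv_sa.star_eq]
    calc ↑w⁻¹ * D * (star D * ↑w⁻¹) = ↑w⁻¹ * (D * star D) * ↑w⁻¹ := by noncomm_ring
    _ = ↑w⁻¹ * ↑w * ↑w⁻¹ := by rw [hDDs, hw_eq]
    _ = ↑w⁻¹ := by rw [Units.inv_mul, one_mul]
  have hw_ge_one : (1:Aˣ) ≤ w := by
    rw [← Units.val_le_val, hw_eq, Units.val_one]
    exact hw1
  have hwinv_le_one : (↑w⁻¹ : A) ≤ 1 := CStarAlgebra.inv_le_one hw_ge_one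
  have hnormwinv : ‖(↑w⁻¹:A)‖ ≤ 1 :=
    (CStarAlgebra.norm_le_one_iff_of_nonneg _ hwinv_nonneg).mpr hwinv_le_one
  have hnormDuinv : ‖(↑Du⁻¹:A)‖ ≤ 1 := by
    have h1 : ‖(↑Du⁻¹:A)‖ * ‖(↑Du⁻¹:A)‖ = ‖(↑w⁻¹:A)‖ := by
      rw [← CStarRing.norm_star_mul_self, hx]
    nlinarith [norm_nonneg (↑Du⁻¹:A)]
  -- norm of r squared
  have hbuinv_nonneg : (0:A) ≤ ↑bu⁻¹ := inv_nonneg_of_nonneg bu (hbu_eq ▸ hb0)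
  set eu : Aˣ := Units.map (algebraMap ℝ A).toMonoidHom (Units.mk0 ε hε.ne') with heudef
  have heu_val : (↑eu : A) = algebraMap ℝ A ε := rfl
  have heu_inv_val : (↑eu⁻¹ : A) = algebraMap ℝ A ε⁻¹ := by
    rw [heudef, ← map_inv]
    rfl
  have hbuinv_le : (↑bu⁻¹ : A) ≤ algebraMap ℝ A ε⁻¹ := by
    rw [← heu_inv_val]
    exact CStarAlgebra.inv_le_inv (heu_val ▸ hε0) (by rw [heu_val, hbu_eq]; exact hεb)
  have hnormbuinv : ‖(↑bu⁻¹:A)‖ ≤ ε⁻¹ :=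
    (CStarAlgebra.norm_le_iff_le_algebraMap _ (inv_nonneg.mpr hε.le) hbuinv_nonneg).mpr hbuinv_le
  have hrr_norm : ‖r‖ * ‖r‖ = ‖(↑bu⁻¹:A)‖ := by
    rw [← CStarRing.norm_star_mul_self, hr_sa.star_eq, hrr, ← hbu_eq,
      CFC.rpow_neg_one_eq_inv bu (hbu_eq ▸ hb0)]
  have hnorm_bound : ‖Ring.inverse T‖ ≤ ε⁻¹ := by
    rw [hV]
    calc ‖r * ↑Du⁻¹ * r‖ ≤ ‖r * ↑Du⁻¹‖ * ‖r‖ := norm_mul_le _ _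
    _ ≤ ‖r‖ * ‖(↑Du⁻¹:A)‖ * ‖r‖ := by
        gcongr
        exact norm_mul_le _ _
    _ ≤ ε⁻¹ := by nlinarith [norm_nonneg r, hrr_norm.symm ▸ hnormbuinv]
  -- Part 3
  set Tu : Aˣ := ru⁻¹ * Du * ru⁻¹ with hTudef
  set V : A := ↑Tu⁻¹ with hVdef
  have hVTu : Ring.inverse T = V := by rw [hTD]; exact Ring.inverse_unit Tu
  have hVT : V * T = 1 := by rw [hTD]; exact Tu.inv_mul
  have hTV : T * V = 1 := by rw [hTD]; exact Tu.mul_inv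
  have hstep : V * (star T - T) * star V = V - star V := by
    rw [mul_sub, sub_mul, mul_assoc, ← star_mul, hVT, star_one, mul_one, one_mul]
  have h2I : (2 * Complex.I) ≠ 0 := by simp [Complex.I_ne_zero]
  have hImV : (2 * Complex.I)⁻¹ • (V - star V) = -(V * b * star V) := by
    rw [← hstep]
    have hsTT : star T - T = (-(2 * Complex.I)) • b := by
      rw [neg_smul, ← hTsT]; abel
    rw [hsTT, mul_smul_comm, smul_mul_assoc, smul_smul, mul_neg, inv_mul_cancel₀ h2I,
      neg_smul, one_smul]
  have hconj : V * algebraMap ℝ A ε * star V ≤ V * b * star V := by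
    have h2 := star_left_conjugate_le_conjugate hεb (star V)
    rwa [star_star] at h2
  -- T ≠ 0 and m > 0
  have hT0 : T ≠ 0 := by
    intro h0
    have hb00 : b = 0 := by rw [hbdef, h0]; simp
    have : algebraMap ℝ A ε = 0 := le_antisymm (hb00 ▸ hεb) hε0
    rw [Algebra.algebraMap_eq_smul_one] at this
    have h1 : (1:A) = 0 := by
      calc (1:A) = ε⁻¹ • (ε • (1:A)) := by rw [smul_smul, inv_mul_cancel₀ hε.ne', one_smul]
      _ = ε⁻¹ • (0:A) := by rw [this]
      _ = 0 := smul_zero _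
    exact one_ne_zero h1
  set m : ℝ := ‖T‖ ^ 2 with hmdef
  have hm : 0 < m := pow_pos (norm_pos_iff.mpr hT0) 2
  set mu : Aˣ := Units.map (algebraMap ℝ A).toMonoidHom (Units.mk0 m hm.ne') with hmudef
  have hmu_val : (↑mu : A) = algebraMap ℝ A m := rfl
  have hmu_inv_val : (↑mu⁻¹ : A) = algebraMap ℝ A m⁻¹ := by
    rw [hmudef, ← map_inv]; rfl
  set sTu : Aˣ := ⟨star T, star V,
    by rw [← star_mul, hVT, star_one],
    by rw [← star_mul, hTV, star_one]⟩ with hsTudef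
  have hP_nonneg : (0:A) ≤ ↑(sTu * Tu) := by
    rw [Units.val_mul, show ((sTu : A)) = star T from rfl, ← hTD]
    exact star_mul_self_nonneg _
  have hP_le : (↑(sTu * Tu) : A) ≤ ↑mu := by
    rw [Units.val_mul, hmu_val, show ((sTu : A)) = star T from rfl, ← hTD]
    refine (CStarAlgebra.norm_le_iff_le_algebraMap _ hm.le (star_mul_self_nonneg T)).mp ?_
    rw [CStarRing.norm_star_mul_self, hmdef, sq]
  have hVV_ge : algebraMap ℝ A m⁻¹ ≤ V * star V := by
    have h3 := CStarAlgebra.inv_le_inv hP_nonneg hP_le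
    rwa [hmu_inv_val, mul_inv_rev, Units.val_mul] at h3
  have hsmul : ∀ x y : A, x ≤ y → algebraMap ℝ A ε * x ≤ algebraMap ℝ A ε * y := by
    intro x y hxy
    have h2 := conjugate_le_conjugate_of_nonneg hxy (halg_nonneg _ (Real.sqrt_nonneg ε))
    simp only [mul_assoc] at h2
    rw [← Algebra.commutes (Real.sqrt ε) x, ← Algebra.commutes (Real.sqrt ε) y] at h2
    rw [← mul_assoc, ← mul_assoc, ← map_mul, Real.mul_self_sqrt hε.le] at h2
    exact h2
  have halg_mono : ∀ x y : ℝ, x ≤ y → algebraMap ℝ A x ≤ algebraMap ℝ A y := by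
    intro x y hxy
    have h4 := halg_nonneg (y - x) (by linarith)
    rw [map_sub] at h4
    exact sub_nonneg.mp h4
  have hk : (ε + ε⁻¹ * m)⁻¹ ≤ ε * m⁻¹ := by
    rw [← one_div, div_le_iff₀ (by positivity)]
    have h6 : ε * m⁻¹ * (ε + ε⁻¹ * m) = ε ^ 2 * m⁻¹ + 1 := by
      field_simp
    have h5 : 0 ≤ ε ^ 2 * m⁻¹ := by positivity
    rw [h6]
    linarith
  have hmain : algebraMap ℝ A ((ε + ε⁻¹ * m)⁻¹) ≤ V * b * star V := by
    calc algebraMap ℝ A ((ε + ε⁻¹ * m)⁻¹) ≤ algebraMap ℝ A (ε * m⁻¹) := halg_mono _ _ hk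
    _ = algebraMap ℝ A ε * algebraMap ℝ A m⁻¹ := map_mul _ _ _
    _ ≤ algebraMap ℝ A ε * (V * star V) := hsmul _ _ hVV_ge
    _ = V * algebraMap ℝ A ε * star V := by
        rw [← mul_assoc, ← Algebra.commutes]
    _ ≤ V * b * star V := hconj
  refine ⟨hT_unit, hnorm_bound, ?_⟩
  rw [hVTu, hImV, Complex.coe_smul, ← Algebra.algebraMap_eq_smul_one, map_neg]
  exact neg_le_neg hmain

/-- In a unital C*-algebra `A`, if `Im T ≥ ε·1` for some `ε > 0`, then `T` is invertible,
`‖T⁻¹‖ ≤ ε⁻¹`, and `Im (T⁻¹) ≤ −(ε + ε⁻¹ ‖T‖²)⁻¹ · 1`.  Here `Im y = (y − y*)/(2i)`. -/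
theorem stmt11 (A : Type*) [NormedRing A] [StarRing A] [CStarRing A]
    [NormedAlgebra ℂ A] [CompleteSpace A] [StarModule ℂ A]
    [PartialOrder A] [StarOrderedRing A]
    (T : A) (ε : ℝ) (hε : 0 < ε)
    (h : ((ε : ℂ)) • (1 : A) ≤ (2 * Complex.I)⁻¹ • (T - star T)) :
    IsUnit T ∧ ‖Ring.inverse T‖ ≤ ε⁻¹ ∧
      (2 * Complex.I)⁻¹ • (Ring.inverse T - star (Ring.inverse T)) ≤
        ((-(ε + ε⁻¹ * ‖T‖ ^ 2)⁻¹ : ℝ) : ℂ) • (1 : A) := by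
  obtain hA | hA := subsingleton_or_nontrivial A
  · refine ⟨isUnit_of_subsingleton T, ?_, le_of_eq (Subsingleton.elim _ _)⟩
    rw [Subsingleton.elim (Ring.inverse T) 0, norm_zero]
    positivity
  · exact stmt11_aux A T ε hε h
end

section
/- Let A be a unital C*-algebra and x ∈ A. Then ‖x‖ < 1 if and only if 1 − x is invertible and there exists ε > 0 such that 2·Re((1−x)⁻¹) ≥ (1+ε)·1, where Re y denotes the self-adjoint element (y + y*)/2 and the order is the standard order on self-adjoint elements of a C*-algebra. -/
section Aux

variable {A : Type*} [CStarAlgebra A] [PartialOrder A] [StarOrderedRing A]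

/-- Multiplication by a nonnegative real scalar (as `algebraMap`) is monotone. -/
lemma stmt12_mul_mono {r : ℝ} (hr : 0 ≤ r) {a b : A} (h : a ≤ b) :
    algebraMap ℝ A r * a ≤ algebraMap ℝ A r * b := by
  set t := Real.sqrt r with ht
  have hs : IsSelfAdjoint (algebraMap ℝ A t) := .algebraMap A (IsSelfAdjoint.all _)
  have key := star_left_conjugate_le_conjugate h (algebraMap ℝ A t)
  rw [hs.star_eq] at key
  have e : ∀ c : A, algebraMap ℝ A t * c * algebraMap ℝ A t = algebraMap ℝ A r * c := by
    intro c
    rw [mul_assoc, ← Algebra.commutes t c, ← mul_assoc, ← map_mul,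
      show t * t = r from Real.mul_self_sqrt hr]
  rwa [e a, e b] at key

/-- The basic algebraic identity. -/
lemma stmt12_expand (x : A) (ε : ℝ) :
    (1 - x) + star (1 - x) - algebraMap ℝ A (1 + ε) * (star (1 - x) * (1 - x))
      = algebraMap ℝ A (1 - ε) + algebraMap ℝ A ε * (x + star x)
        - algebraMap ℝ A (1 + ε) * (star x * x) := by
  have h1 : algebraMap ℝ A (1 - ε) = 1 - algebraMap ℝ A ε := by rw [map_sub, map_one]
  have h2 : algebraMap ℝ A (1 + ε) = 1 + algebraMap ℝ A ε := by rw [map_add, map_one]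
  simp only [star_sub, star_one, h1, h2]
  noncomm_ring

/-- Conjugation bridge: the resolvent inequality is equivalent to a polynomial inequality. -/
lemma stmt12_bridge {x : A} (hu : IsUnit (1 - x)) (r : ℝ) :
    algebraMap ℝ A r ≤ Ring.inverse (1 - x) + star (Ring.inverse (1 - x)) ↔
    algebraMap ℝ A r * (star (1 - x) * (1 - x)) ≤ (1 - x) + star (1 - x) := by
  set u : A := 1 - x with hudef
  set v : A := ↑hu.unit⁻¹ with hvdef
  have hz : Ring.inverse u = v := by rw [← hu.unit_spec, Ring.inverse_unit]
  have huv : u * v = 1 := hu.mul_val_inv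
  have hvu : v * u = 1 := hu.val_inv_mul
  rw [hz]
  constructor
  · intro h
    have key := star_left_conjugate_le_conjugate h u
    have eL : star u * algebraMap ℝ A r * u = algebraMap ℝ A r * (star u * u) := by
      rw [← Algebra.commutes r (star u), mul_assoc]
    have eR : star u * (v + star v) * u = u + star u := by
      rw [mul_add, add_mul, mul_assoc (star u) v u, hvu, mul_one,
        ← star_mul, hvu, star_one, one_mul, add_comm]
    rwa [eL, eR] at key
  · intro h
    have key := star_left_conjugate_le_conjugate h v
    have eL : star v * (algebraMap ℝ A r * (star u * u)) * v = algebraMap ℝ A r := by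
      rw [← mul_assoc (star v) (algebraMap ℝ A r) (star u * u),
        ← Algebra.commutes r (star v), mul_assoc (algebraMap ℝ A r) (star v) (star u * u),
        mul_assoc (algebraMap ℝ A r) (star v * (star u * u)) v,
        ← mul_assoc (star v) (star u) u, ← star_mul, mul_assoc (star (u * v)) u v, huv,
        star_one, one_mul, mul_one]
    have eR : star v * (u + star u) * v = v + star v := by
      rw [mul_add, add_mul, mul_assoc (star v) u v, huv, mul_one,
        ← star_mul, huv, star_one, one_mul, add_comm]
    rwa [eL, eR] at key
  

/-- `algebraMap` of a nonneg real is nonneg. -/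
lemma stmt12_algebraMap_nonneg' {r : ℝ} (hr : 0 ≤ r) : (0 : A) ≤ algebraMap ℝ A r := by
  have h := star_mul_self_nonneg (algebraMap ℝ A (Real.sqrt r))
  have hs : IsSelfAdjoint (algebraMap ℝ A (Real.sqrt r)) := .algebraMap A (IsSelfAdjoint.all _)
  rwa [hs.star_eq, ← map_mul, show Real.sqrt r * Real.sqrt r = r from Real.mul_self_sqrt hr] at h

/-- `algebraMap` is monotone into the C*-algebra. -/
lemma stmt12_algebraMap_mono' {r s : ℝ} (h : r ≤ s) :
    algebraMap ℝ A r ≤ algebraMap ℝ A s := by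
  rw [← sub_nonneg, ← map_sub]
  exact stmt12_algebraMap_nonneg' (by linarith)

end Aux

/-- In a unital C*-algebra `A`, `‖x‖ < 1` iff `1 − x` is invertible and
`2·Re((1−x)⁻¹) ≥ (1+ε)·1` for some `ε > 0`, where `Re y = (y + y*)/2`. -/
theorem stmt12 (A : Type*) [NormedRing A] [StarRing A] [CStarRing A]
    [NormedAlgebra ℂ A] [CompleteSpace A] [StarModule ℂ A]
    [PartialOrder A] [StarOrderedRing A] (x : A) :
    ‖x‖ < 1 ↔
      IsUnit (1 - x) ∧ ∃ ε : ℝ, 0 < ε ∧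
        (((1 + ε : ℝ)) : ℂ) • (1 : A) ≤
          (2 : ℂ) • ((2 : ℂ)⁻¹ •
            (Ring.inverse (1 - x) + star (Ring.inverse (1 - x)))) := by
  letI : CStarAlgebra A := ⟨⟩
  rcases subsingleton_or_nontrivial A with hA | hA
  · have h0 : ‖x‖ < 1 := by
      rw [Subsingleton.elim x 0, norm_zero]; exact one_pos
    exact ⟨fun _ => ⟨isUnit_of_subsingleton _, 1, one_pos,
      le_of_eq (Subsingleton.elim _ _)⟩, fun _ => h0⟩
  have hsmul : ∀ r : ℝ, ((r : ℂ)) • (1 : A) = algebraMap ℝ A r := fun r => by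
    rw [Complex.coe_smul, Algebra.algebraMap_eq_smul_one]
  have h2 : ∀ z : A, (2 : ℂ) • ((2 : ℂ)⁻¹ • z) = z := fun z => by
    rw [smul_smul]; norm_num
  have hexp : star (1 - x) * (1 - x) = 1 - (x + star x) + star x * x := by
    simp only [star_sub, star_one]; noncomm_ring
  constructor
  · intro h
    have hu : IsUnit (1 - x) := isUnit_one_sub_of_norm_lt_one h
    refine ⟨hu, ?_⟩
    have hn0 : (0 : ℝ) ≤ ‖x‖ := norm_nonneg x
    set n := ‖x‖ with hn
    set ε : ℝ := (1 - n ^ 2) / (2 * (1 + n) ^ 2) with hε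
    have hεpos : 0 < ε := div_pos (by nlinarith) (by positivity)
    have hεval : ε * (2 * (1 + n) ^ 2) = 1 - n ^ 2 := by
      rw [hε]; field_simp
    refine ⟨ε, hεpos, ?_⟩
    rw [h2, hsmul, stmt12_bridge hu, ← sub_nonneg, stmt12_expand]
    -- bound the three pieces
    have hA1 : star x * x ≤ algebraMap ℝ A (n ^ 2) := by
      simpa [hn] using CStarAlgebra.star_mul_le_algebraMap_norm_sq (a := x)
    have hA2 : algebraMap ℝ A (1 + ε) * (star x * x)
        ≤ algebraMap ℝ A ((1 + ε) * n ^ 2) := by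
      rw [map_mul]
      exact stmt12_mul_mono (by linarith) hA1
    have hsa : IsSelfAdjoint (x + star x) := by
      rw [IsSelfAdjoint, star_add, star_star, add_comm]
    have hnorm : ‖x + star x‖ ≤ 2 * n := by
      calc ‖x + star x‖ ≤ ‖x‖ + ‖star x‖ := norm_add_le _ _
        _ = 2 * n := by rw [norm_star]; ring
    have hB2 : -(algebraMap ℝ A (2 * n)) ≤ x + star x :=
      le_trans (neg_le_neg (stmt12_algebraMap_mono' hnorm))
        (hsa.neg_algebraMap_norm_le_self)
    have hB3 : -(algebraMap ℝ A (ε * (2 * n))) ≤ algebraMap ℝ A ε * (x + star x) := by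
      have := stmt12_mul_mono hεpos.le hB2
      rwa [mul_neg, ← map_mul] at this
    have key : algebraMap ℝ A ((1 - ε) - ε * (2 * n) - (1 + ε) * n ^ 2)
        ≤ algebraMap ℝ A (1 - ε) + algebraMap ℝ A ε * (x + star x)
          - algebraMap ℝ A (1 + ε) * (star x * x) := by
      rw [map_sub, map_sub, sub_eq_add_neg (algebraMap ℝ A (1 - ε))]
      exact sub_le_sub (add_le_add le_rfl hB3) hA2
    refine le_trans (stmt12_algebraMap_nonneg' ?_) key
    nlinarith [sq_nonneg (1 + n), hεval, hεpos]
  · rintro ⟨hu, ε, hεpos, hle⟩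
    rw [h2, hsmul, stmt12_bridge hu, ← sub_nonneg, stmt12_expand] at hle
    -- a lower bound on `star (1-x) * (1-x)`
    set a : A := star (1 - x) * (1 - x) with ha_def
    have ha : (0 : A) ≤ a := star_mul_self_nonneg _
    have haU : IsUnit a := hu.star.mul hu
    have hspec : ∀ t ∈ spectrum ℝ a, 0 < t := by
      intro t ht
      refine lt_of_le_of_ne (spectrum_nonneg_of_nonneg ha ht) fun h0 => ?_
      exact (spectrum.zero_notMem_iff ℝ).mpr haU (h0 ▸ ht)
    obtain ⟨c, hc, hca⟩ :=
      (CFC.exists_pos_algebraMap_le_iff (IsSelfAdjoint.of_nonneg ha)).mpr hspec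
    set c' : ℝ := min c (1 / (2 * ε)) with hc'def
    have hc' : 0 < c' := lt_min hc (by positivity)
    have hεc : ε * c' ≤ 1 / 2 := by
      have h1 : c' ≤ 1 / (2 * ε) := min_le_right _ _
      calc ε * c' ≤ ε * (1 / (2 * ε)) := by
            exact mul_le_mul_of_nonneg_left h1 hεpos.le
        _ = 1 / 2 := by field_simp
    have hca' : algebraMap ℝ A c' ≤ a :=
      le_trans (stmt12_algebraMap_mono' (min_le_left _ _)) hca
    have N3 : (0 : A) ≤ algebraMap ℝ A ε * a - algebraMap ℝ A (ε * c') := by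
      rw [sub_nonneg, map_mul]
      exact stmt12_mul_mono hεpos.le hca'
    have final : (0 : A) ≤ algebraMap ℝ A (1 - ε * c') - star x * x := by
      have hsum := add_nonneg hle N3
      have E : (algebraMap ℝ A (1 - ε) + algebraMap ℝ A ε * (x + star x)
            - algebraMap ℝ A (1 + ε) * (star x * x))
          + (algebraMap ℝ A ε * a - algebraMap ℝ A (ε * c'))
          = algebraMap ℝ A (1 - ε * c') - star x * x := by
        rw [hexp]
        simp only [map_sub, map_add, map_one, map_mul]
        noncomm_ring
      rwa [E] at hsum
    rw [sub_nonneg] at final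
    have hnp : ‖star x * x‖ ≤ ‖algebraMap ℝ A (1 - ε * c')‖ :=
      CStarAlgebra.norm_le_norm_of_nonneg_of_le (star_mul_self_nonneg x) final
    rw [norm_algebraMap', CStarRing.norm_star_mul_self,
      Real.norm_of_nonneg (by linarith)] at hnp
    nlinarith [norm_nonneg x, mul_pos hεpos hc']
end

section
/- Let A be a unital complex Banach algebra and x ∈ A with ‖x‖ < 1. Then every z in the spectrum of (1−x)⁻¹ satisfies Re(z) ≥ 1/2; equivalently, if Re(z) < 1/2 then (1−x)⁻¹ − z·1 is invertible. -/
/-- In a unital complex Banach algebra, if `‖x‖ < 1`, then every `z` in the spectrum of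
`(1−x)⁻¹` satisfies `Re z ≥ 1/2`. -/
theorem stmt14 (A : Type*) [NormedRing A] [NormedAlgebra ℂ A] [CompleteSpace A]
    (x : A) (hx : ‖x‖ < 1) :
    ∀ z ∈ spectrum ℂ (Ring.inverse (1 - x)), (1 / 2 : ℝ) ≤ z.re := by
  intro z hz
  by_contra hre
  push_neg at hre
  set u : Aˣ := Units.oneSub x hx with hu
  have hinv : Ring.inverse (1 - x) = ((u⁻¹ : Aˣ) : A) := Ring.inverse_unit u
  rw [hinv] at hz
  have hz0 : z ≠ 0 := spectrum.ne_zero_of_mem_of_unit hz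
  have h1 : z⁻¹ ∈ spectrum ℂ ((u : A)) := by
    have := (spectrum.inv_mem_iff (r := Units.mk0 z hz0) (a := u⁻¹)).mp hz
    simpa using this
  have h2 : z⁻¹ ∈ spectrum ℂ (1 - x) := h1
  rw [spectrum.mem_iff] at h2
  apply h2
  -- let w = 1 - z⁻¹; then |w| > 1
  set w : ℂ := 1 - z⁻¹ with hw
  have hz1 : ‖z‖ < ‖z - 1‖ := by
    have h3 : ‖z‖ ^ 2 < ‖z - 1‖ ^ 2 := by
      have e1 : ‖z‖ ^ 2 = z.re ^ 2 + z.im ^ 2 := by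
        simp [← Complex.normSq_eq_norm_sq, Complex.normSq_apply]; ring
      have e2 : ‖z - 1‖ ^ 2 = (z.re - 1) ^ 2 + z.im ^ 2 := by
        simp [← Complex.normSq_eq_norm_sq, Complex.normSq_apply]; ring
      nlinarith
    nlinarith [norm_nonneg z, norm_nonneg (z - 1)]
  have hzpos : (0 : ℝ) < ‖z‖ := norm_pos_iff.mpr hz0
  have hwgt : 1 < ‖w‖ := by
    have : w = (z - 1) / z := by rw [hw, sub_div, div_self hz0, one_div]
    rw [this, norm_div]
    rw [lt_div_iff₀ hzpos]
    simpa using hz1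
  have hw0 : w ≠ 0 := by
    intro h; rw [h] at hwgt; norm_num at hwgt
  have hy : ‖w⁻¹ • x‖ < 1 := by
    rw [norm_smul, norm_inv]
    calc ‖w‖⁻¹ * ‖x‖ < ‖w‖⁻¹ * 1 := by
          apply mul_lt_mul_of_pos_left hx
          positivity
      _ ≤ 1 := by
          rw [mul_one, inv_le_one_iff₀]
          right; linarith
  have hunit : IsUnit ((1 : A) - w⁻¹ • x) := isUnit_one_sub_of_norm_lt_one hy
  have hunit2 : IsUnit (w • ((1 : A) - w⁻¹ • x)) := by
    rw [Algebra.smul_def]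
    exact ((isUnit_iff_ne_zero.mpr hw0).map (algebraMap ℂ A)).mul hunit
  have key : w • ((1 : A) - w⁻¹ • x) = w • (1 : A) - x := by
    rw [smul_sub, smul_inv_smul₀ hw0]
  rw [key] at hunit2
  have : algebraMap ℂ A z⁻¹ - (1 - x) = -(w • (1 : A) - x) := by
    rw [Algebra.algebraMap_eq_smul_one, hw, sub_smul, one_smul]
    abel
  rw [this]
  exact hunit2.neg
end
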